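/- Let q, n be positive integers with (n+1)/2 ≤ q ≤ n-1 and gcd(q,n) = 1. Suppose Γ is a digraph on vertices {1,...,n} containing the full n-cycle (edges (j, 1+(j mod n)) for all j), such that all directed cycles of Γ have length q or n. Then every edge of Γ not on the n-cycle has the form (j, 1+((j-q) mod n)) for some j. -/

import Mathlib

/-- There is a directed cycle of length `m` in the digraph with edge relation `E`. -/
def IsCycleIn {V : Type*} (E : V → V → Prop) (m : ℕ) : Prop :=
  ∃ f : ZMod m → V, Function.Injective f ∧ ∀ k, E (f k) (f (k + 1))

theorem stmt6 (n q : ℕ) (hq2 : n + 1 ≤ 2 * q) (hqn : q ≤ n - 1) (hn : 1 ≤ n)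
    (hgcd : Nat.gcd q n = 1)
    (Γ : ZMod n → ZMod n → Prop) (hcyc : ∀ i, Γ i (i + 1))
    (hall : ∀ m, 0 < m → IsCycleIn Γ m → m = q ∨ m = n) :
    ∀ i j, Γ i j → j = i + 1 ∨ j = i + 1 - (q : ZMod n) := by
  intro i j hij
  by_cases hji : j = i + 1
  · left; exact hji
  right
  haveI : NeZero n := ⟨by omega⟩
  set d := (i - j).val with hd
  have hdn : d < n := ZMod.val_lt _
  set m := d + 1 with hm
  haveI : NeZero m := ⟨by omega⟩
  have hfd : ((d : ℕ) : ZMod n) = i - j := by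
    rw [hd, ZMod.natCast_val, ZMod.cast_id]
  have hcycm : IsCycleIn Γ m := by
    refine ⟨fun k => j + ((k.val : ℕ) : ZMod n), ?_, ?_⟩
    · intro a b hab
      have hab' : ((a.val : ℕ) : ZMod n) = ((b.val : ℕ) : ZMod n) := by
        exact add_left_cancel hab
      have ha : a.val < n := lt_of_lt_of_le (ZMod.val_lt a) (by omega)
      have hb : b.val < n := lt_of_lt_of_le (ZMod.val_lt b) (by omega)
      have : a.val = b.val := by
        have := congrArg ZMod.val hab'
        rwa [ZMod.val_cast_of_lt ha, ZMod.val_cast_of_lt hb] at this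
      exact ZMod.val_injective m this
    · intro k
      have hkm : k.val < m := ZMod.val_lt k
      rcases lt_or_eq_of_le (Nat.lt_succ_iff.mp hkm) with hkd | hkd
      · -- k.val < d : a step along the n-cycle
        haveI : Fact (1 < m) := ⟨by omega⟩
        have h1 : (1 : ZMod m).val = 1 := ZMod.val_one m
        have hk1 : (k + 1).val = k.val + 1 := by
          rw [ZMod.val_add_of_lt (by rw [h1]; omega), h1]
        show Γ (j + ((k.val : ℕ) : ZMod n)) (j + (((k + 1).val : ℕ) : ZMod n))
        rw [hk1]
        push_cast
        have h := hcyc (j + ((k.val : ℕ) : ZMod n))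
        rwa [add_assoc] at h
      · -- k.val = d : the closing edge i → j
        have hk : k = ((d : ℕ) : ZMod m) := by
          rw [← hkd, ZMod.natCast_val, ZMod.cast_id]
        have hk1 : k + 1 = 0 := by
          rw [hk]
          have : ((d : ℕ) : ZMod m) + 1 = ((m : ℕ) : ZMod m) := by push_cast; exact (Nat.cast_succ (R := ZMod m) d).symm
          rw [this, ZMod.natCast_self]
        show Γ (j + ((k.val : ℕ) : ZMod n)) (j + (((k + 1).val : ℕ) : ZMod n))
        rw [hkd, hk1, hfd]
        simpa using hij
  rcases hall m (by omega) hcycm with hmq | hmn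
  · -- m = q
    have hq1 : 1 ≤ q := by omega
    have hdq : d = q - 1 := by omega
    have hij' : i - j = (q : ZMod n) - 1 := by
      rw [← hfd, hdq, Nat.cast_sub hq1, Nat.cast_one]
    linear_combination -hij'
  · -- m = n : would force j = i + 1, contradiction
    exfalso
    apply hji
    have hdn1 : d = n - 1 := by omega
    have hij' : i - j = -1 := by
      rw [← hfd, hdn1, Nat.cast_sub hn, Nat.cast_one, ZMod.natCast_self]
      ring
    linear_combination -hij'
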